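/- Let Γ be an ordered abelian group such that for every prime p, Γ has a nontrivial p-divisible convex subgroup. Then Γ is elementarily equivalent (as an ordered abelian group) to an ordered abelian group Γ' that has a nontrivial divisible convex subgroup. -/

import Mathlib

open FirstOrder Language

/-- Function symbols of the language of ordered abelian groups: `0`, `-`, `+`. -/
inductive OAGFunc : ℕ → Type
  | zero : OAGFunc 0
  | neg : OAGFunc 1
  | add : OAGFunc 2

/-- Relation symbols of the language of ordered abelian groups: `≤`. -/
inductive OAGRel : ℕ → Type
  | le : OAGRel 2

/-- The first-order language of ordered abelian groups. -/
def oagLang : Language := ⟨OAGFunc, OAGRel⟩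

/-- The natural `oagLang`-structure on an ordered abelian group. -/
instance oagStructure (G : Type*) [AddCommGroup G] [LE G] : oagLang.Structure G where
  funMap {n} f v :=
    match n, f, v with
    | _, OAGFunc.zero, _ => 0
    | _, OAGFunc.neg, v => -(v 0)
    | _, OAGFunc.add, v => v 0 + v 1
  RelMap {n} r v :=
    match n, r, v with
    | _, OAGRel.le, v => v 0 ≤ v 1

open Filter

/-- The first-order isomorphism between the ultrapower (as `Filter.Product`) and the germ
ultrapower of an ordered abelian group. -/
noncomputable def oagUltrapowerEquiv (Γ : Type) [AddCommGroup Γ] [LinearOrder Γ] [IsOrderedAddMonoid Γ] :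
    oagLang.Equiv ((↑(hyperfilter ℕ) : Filter ℕ).Product (fun _ => Γ))
      ((↑(hyperfilter ℕ) : Filter ℕ).Germ Γ) where
  toEquiv := Quotient.congrRight (fun _ _ => by exact Iff.rfl)
  map_fun' {n} f x := by
    obtain ⟨g, rfl⟩ : ∃ g : Fin n → (ℕ → Γ),
        (fun i => (↑(g i) : (↑(hyperfilter ℕ) : Filter ℕ).Product (fun _ => Γ))) = x := by
      refine ⟨fun i => (x i).out, funext fun i => ?_⟩
      exact Quotient.out_eq _
    erw [Ultraproduct.funMap_cast]
    cases f with
    | zero => rfl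
    | neg => rfl
    | add => rfl
  map_rel' {n} r x := by
    obtain ⟨g, rfl⟩ : ∃ g : Fin n → (ℕ → Γ),
        (fun i => (↑(g i) : (↑(hyperfilter ℕ) : Filter ℕ).Product (fun _ => Γ))) = x := by
      refine ⟨fun i => (x i).out, funext fun i => ?_⟩
      exact Quotient.out_eq _
    cases r with
    | le =>
      show ((↑(g 0) : (↑(hyperfilter ℕ) : Filter ℕ).Germ Γ) ≤ ↑(g 1)) ↔ _
      rw [Filter.Germ.coe_le]
      exact (@relMap_quotient_mk' oagLang _
        ((↑(hyperfilter ℕ) : Filter ℕ).productSetoid (fun _ : ℕ => Γ))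
        (Ultraproduct.setoidPrestructure _ _) 2 (OAGRel.le : oagLang.Relations 2) g).symm

lemma oag_germ_smul_coe (Γ : Type) [AddCommGroup Γ] [LinearOrder Γ] [IsOrderedAddMonoid Γ] (n : ℕ) (g : ℕ → Γ) :
    (n • (↑g : (↑(hyperfilter ℕ) : Filter ℕ).Germ Γ)) = ↑(fun i => n • g i) := by
  induction n with
  | zero =>
    have : (fun i : ℕ => (0 : ℕ) • g i) = fun _ : ℕ => (0 : Γ) := by
      funext i; rw [zero_nsmul]
    rw [zero_nsmul, this]
    rfl
  | succ n ih =>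
    have : (fun i : ℕ => (n + 1 : ℕ) • g i) = (fun i : ℕ => n • g i) + g := by
      funext i; simp [succ_nsmul]
    rw [succ_nsmul, ih, this, Filter.Germ.coe_add]

/-- if an ordered abelian group `Γ` has, for every prime `p`, a nontrivial
`p`-divisible convex subgroup, then `Γ` is elementarily equivalent (in the language of
ordered abelian groups) to an ordered abelian group `Γ'` having a nontrivial divisible
convex subgroup. -/
theorem elementarilyEquivalent_divisible_convex_subgroup
    (Γ : Type) [AddCommGroup Γ] [LinearOrder Γ] [IsOrderedAddMonoid Γ]
    (h : ∀ p : ℕ, p.Prime →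
      ∃ C : AddSubgroup Γ, C ≠ ⊥ ∧
        (∀ x ∈ C, ∀ y : Γ, 0 ≤ y → y ≤ x → y ∈ C) ∧
        (∀ y ∈ C, ∃ z ∈ C, p • z = y)) :
    ∃ (Γ' : Type) (_i : AddCommGroup Γ') (_l : LinearOrder Γ') (_o : IsOrderedAddMonoid Γ'),
      oagLang.ElementarilyEquivalent Γ Γ' ∧
      ∃ C : AddSubgroup Γ', C ≠ ⊥ ∧
        (∀ x ∈ C, ∀ y : Γ', 0 ≤ y → y ≤ x → y ∈ C) ∧
        (∀ n : ℕ, 0 < n → ∀ y ∈ C, ∃ z ∈ C, n • z = y) := by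
  classical
  haveI : Nonempty Γ := ⟨0⟩
  set Γ' := (↑(hyperfilter ℕ) : Filter ℕ).Germ Γ with hΓ'
  -- elementary equivalence via Łoś
  have ee : oagLang.ElementarilyEquivalent Γ Γ' := by
    have e1 : oagLang.ElementarilyEquivalent Γ
        ((↑(hyperfilter ℕ) : Filter ℕ).Product (fun _ => Γ)) := by
      rw [elementarilyEquivalent_iff]
      intro φ
      rw [Ultraproduct.sentence_realize]
      simp
    exact e1.trans (StrongHomClass.elementarilyEquivalent (oagUltrapowerEquiv Γ))
  -- the convex p-divisible subgroups
  set Cp : ∀ p : ℕ, p.Prime → AddSubgroup Γ := fun p hp => (h p hp).choose with hCp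
  have Cspec : ∀ (p : ℕ) (hp : p.Prime), Cp p hp ≠ ⊥ ∧
      (∀ x ∈ Cp p hp, ∀ y : Γ, 0 ≤ y → y ≤ x → y ∈ Cp p hp) ∧
      (∀ y ∈ Cp p hp, ∃ z ∈ Cp p hp, p • z = y) := fun p hp => (h p hp).choose_spec
  -- every nontrivial convex subgroup contains a positive element
  have posmem : ∀ (p : ℕ) (hp : p.Prime), ∃ a : Γ, 0 < a ∧ a ∈ Cp p hp := by
    intro p hp
    obtain ⟨⟨x, hxC⟩, hx0⟩ := AddSubgroup.ne_bot_iff_exists_ne_zero.1 (Cspec p hp).1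
    have hx0' : x ≠ 0 := by simpa using hx0
    rcases le_or_gt x 0 with hx | hx
    · exact ⟨-x, by simpa using lt_of_le_of_ne hx hx0', AddSubgroup.neg_mem _ hxC⟩
    · exact ⟨x, hx, hxC⟩
  -- positive elements in finite intersections
  have key : ∀ s : Finset ℕ, ∃ a : Γ, 0 < a ∧ ∀ p ∈ s, ∀ hp : p.Prime, a ∈ Cp p hp := by
    intro s
    induction s using Finset.induction_on with
    | empty =>
      obtain ⟨a, ha, -⟩ := posmem 2 Nat.prime_two
      exact ⟨a, ha, by simp⟩
    | @insert q s hq ih =>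
      obtain ⟨a, ha, haC⟩ := ih
      by_cases hqp : q.Prime
      · obtain ⟨b, hb, hbC⟩ := posmem q hqp
        refine ⟨min a b, lt_min ha hb, ?_⟩
        intro p hp hpp
        rcases Finset.mem_insert.1 hp with rfl | hp
        · exact (Cspec p hpp).2.1 b hbC _ (le_of_lt (lt_min ha hb)) (min_le_right a b)
        · exact (Cspec p hpp).2.1 a (haC p hp hpp) _ (le_of_lt (lt_min ha hb)) (min_le_left a b)
      · refine ⟨a, ha, ?_⟩
        intro p hp hpp
        rcases Finset.mem_insert.1 hp with rfl | hp
        · exact absurd hpp hqp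
        · exact haC p hp hpp
  -- the diagonal-ish element
  set f : ℕ → Γ := fun i =>
    (key ((Finset.range (i + 1)).filter Nat.Prime)).choose with hfdef
  have fpos : ∀ i, 0 < f i := fun i =>
    (key ((Finset.range (i + 1)).filter Nat.Prime)).choose_spec.1
  have fmem : ∀ i, ∀ p : ℕ, p ≤ i → ∀ hp : p.Prime, f i ∈ Cp p hp := by
    intro i p hpi hp
    exact (key ((Finset.range (i + 1)).filter Nat.Prime)).choose_spec.2 p
      (Finset.mem_filter.2 ⟨Finset.mem_range.2 (Nat.lt_succ_of_le hpi), hp⟩) hp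
  set a : Γ' := (↑f : Γ') with hadef
  have ha_pos : 0 < a := by
    refine Filter.Germ.coe_pos.2 ?_
    exact Filter.Eventually.of_forall fun i => fpos i
  -- the convex subgroup generated by a
  set C : AddSubgroup Γ' :=
    { carrier := {y : Γ' | ∃ n : ℕ, -(n • a) ≤ y ∧ y ≤ n • a}
      zero_mem' := ⟨0, by simp [zero_nsmul]⟩
      add_mem' := by
        rintro x y ⟨m, hm1, hm2⟩ ⟨k, hk1, hk2⟩
        refine ⟨m + k, ?_, ?_⟩
        · rw [add_nsmul, neg_add]
          exact add_le_add hm1 hk1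
        · rw [add_nsmul]
          exact add_le_add hm2 hk2
      neg_mem' := by
        rintro x ⟨m, hm1, hm2⟩
        refine ⟨m, ?_, ?_⟩
        · exact neg_le_neg (α := Γ') hm2
        · exact neg_le (α := Γ') |>.1 hm1 } with hCdef
  have haC : a ∈ C := by
    refine ⟨1, ?_, ?_⟩
    · rw [one_nsmul]; exact neg_le_self ha_pos.le
    · rw [one_nsmul]
  have hCne : C ≠ ⊥ := by
    intro hbot
    rw [hbot, AddSubgroup.mem_bot] at haC
    exact ha_pos.ne' haC
  have hCconv : ∀ x ∈ C, ∀ y : Γ', 0 ≤ y → y ≤ x → y ∈ C := by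
    rintro x ⟨n, hn1, hn2⟩ y hy0 hyx
    refine ⟨n, le_trans (α := Γ') ?_ hy0, le_trans (α := Γ') hyx hn2⟩
    exact neg_nonpos.2 (nsmul_nonneg ha_pos.le n)
  -- divisibility by primes
  have primediv : ∀ p : ℕ, p.Prime → ∀ y ∈ C, ∃ z ∈ C, p • z = y := by
    rintro p hp y ⟨n, hn1, hn2⟩
    obtain ⟨g, rfl⟩ : ∃ g : ℕ → Γ, (↑g : Γ') = y := ⟨y.out, y.out_eq⟩
    have hcoe : (n • a : Γ') = ↑(fun i => n • f i) := oag_germ_smul_coe Γ n f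
    have hncoe : (-(n • a) : Γ') = ↑(fun i => -(n • f i)) := by
      rw [hcoe]
      exact (Filter.Germ.coe_neg _).symm
    have h1' : ∀ᶠ i in (↑(hyperfilter ℕ) : Filter ℕ), -(n • f i) ≤ g i := by
      rw [hncoe] at hn1
      exact Filter.Germ.coe_le.1 hn1
    have h2' : ∀ᶠ i in (↑(hyperfilter ℕ) : Filter ℕ), g i ≤ n • f i := by
      rw [hcoe] at hn2
      exact Filter.Germ.coe_le.1 hn2
    have hple : ∀ᶠ i in (↑(hyperfilter ℕ) : Filter ℕ), p ≤ i := by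
      refine Filter.Eventually.filter_mono (hyperfilter_le_cofinite) ?_
      rw [Nat.cofinite_eq_atTop]
      exact Filter.eventually_atTop.2 ⟨p, fun b hb => hb⟩
    have E := (h1'.and h2').and hple
    have kz : ∀ i : ℕ, ∃ z : Γ,
        ((-(n • f i) ≤ g i ∧ g i ≤ n • f i) ∧ p ≤ i) →
          (p • z = g i ∧ -(n • f i) ≤ z ∧ z ≤ n • f i) := by
      intro i
      by_cases hi : ((-(n • f i) ≤ g i ∧ g i ≤ n • f i) ∧ p ≤ i)
      · obtain ⟨⟨hi1, hi2⟩, hi3⟩ := hi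
        have hfa : f i ∈ Cp p hp := fmem i p hi3 hp
        have hna : (n • f i) ∈ Cp p hp := AddSubgroup.nsmul_mem _ hfa n
        have hgC : g i ∈ Cp p hp := by
          rcases le_total 0 (g i) with hg0 | hg0
          · exact (Cspec p hp).2.1 _ hna _ hg0 hi2
          · have h1 : (0 : Γ) ≤ -(g i) := neg_nonneg.2 hg0
            have h2 : -(g i) ≤ n • f i := neg_le.1 hi1
            have := (Cspec p hp).2.1 _ hna _ h1 h2
            simpa using AddSubgroup.neg_mem _ this
        obtain ⟨z, _, hzp⟩ := (Cspec p hp).2.2 (g i) hgC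
        have hnf0 : (0 : Γ) ≤ n • f i := nsmul_nonneg (fpos i).le n
        have hz2 : z ≤ n • f i := by
          rcases le_total 0 z with hz0 | hz0
          · calc z = 1 • z := (one_nsmul z).symm
              _ ≤ p • z := nsmul_le_nsmul_left hz0 hp.one_lt.le
              _ = g i := hzp
              _ ≤ n • f i := hi2
          · exact hz0.trans hnf0
        have hz1 : -(n • f i) ≤ z := by
          rcases le_total z 0 with hz0 | hz0
          · have hnz : (0 : Γ) ≤ -z := neg_nonneg.2 hz0
            have : (-z : Γ) ≤ p • (-z) := by
              calc (-z : Γ) = 1 • (-z) := (one_nsmul _).symm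
                _ ≤ p • (-z) := nsmul_le_nsmul_left hnz hp.one_lt.le
            rw [smul_neg, hzp] at this
            -- this : -z ≤ -(g i), so g i ≤ z
            have := neg_le_neg this
            rw [neg_neg, neg_neg] at this
            exact hi1.trans this
          · exact (neg_nonpos.2 hnf0).trans hz0
        exact ⟨z, fun _ => ⟨hzp, hz1, hz2⟩⟩
      · exact ⟨0, fun hcon => absurd hcon hi⟩
    choose zf hzf using kz
    refine ⟨(↑zf : Γ'), ⟨n, ?_, ?_⟩, ?_⟩
    · rw [hncoe]
      exact Filter.Germ.coe_le.2 (E.mono fun i hi => (hzf i hi).2.1)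
    · rw [hcoe]
      exact Filter.Germ.coe_le.2 (E.mono fun i hi => (hzf i hi).2.2)
    · rw [oag_germ_smul_coe]
      exact Filter.Germ.coe_eq.2 (E.mono fun i hi => (hzf i hi).1)
  -- divisibility by all positive naturals
  have alldiv : ∀ n : ℕ, 0 < n → ∀ y ∈ C, ∃ z ∈ C, n • z = y := by
    intro n
    induction n using Nat.strong_induction_on with
    | _ n ih =>
      intro hn y hy
      rcases eq_or_ne n 1 with rfl | hne
      · exact ⟨y, hy, one_nsmul y⟩
      · obtain ⟨p, pp, m, rfl⟩ : ∃ p, p.Prime ∧ ∃ m, n = p * m := by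
          obtain ⟨p, pp, hdvd⟩ := Nat.exists_prime_and_dvd hne
          exact ⟨p, pp, hdvd⟩
        have hm : 0 < m := Nat.pos_of_ne_zero (by rintro rfl; simp at hn)
        have hlt : m < p * m := (lt_mul_iff_one_lt_left hm).2 pp.one_lt
        obtain ⟨z, hzC, hz⟩ := ih m hlt hm y hy
        obtain ⟨z', hz'C, hz'⟩ := primediv p pp z hzC
        refine ⟨z', hz'C, ?_⟩
        rw [mul_nsmul, hz', hz]
  exact ⟨Γ', inferInstance, inferInstance, inferInstance, ee, C, hCne, hCconv, alldiv⟩
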